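/- (Representation formula III, continuous case.) Let p be a probability density on ℝ positive exactly on the open interval S = (a, b), and let X₁, X₂ be i.i.d. with density p. Then for every h with E|h(X₁)| < ∞ and every x ∈ S: −L_p h(x) = (1/p(x)) · E[(h(X₂) − h(X₁)) · 1{X₁ ≤ x ≤ X₂}]. -/

import Mathlib

open MeasureTheory Set

/-- The inverse Stein operator
`L_p h (x) = (1/p(x)) ∫_a^x (h(u) − E[h(X)]) p(u) du`. -/
noncomputable def invStein (p h : ℝ → ℝ) (x : ℝ) : ℝ :=
  (∫ u in Iio x, (h u - ∫ y, h y * p y) * p u) / p x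

/-- Representation formula III, continuous case: for a probability density `p`
positive exactly on the open interval `S` and `X₁, X₂` i.i.d. with density `p`,
`−L_p h(x) = (1/p(x)) E[(h(X₂) − h(X₁)) 1{X₁ ≤ x ≤ X₂}]` for every `x ∈ S`. -/
theorem representation_formula_III_continuous
    (p : ℝ → ℝ) (S : Set ℝ) (hSopen : IsOpen S) (hSconn : S.OrdConnected)
    (hpmeas : Measurable p) (hp0 : ∀ x, 0 ≤ p x)
    (hppos : ∀ x : ℝ, 0 < p x ↔ x ∈ S)
    (hp1 : ∫ x, p x = 1)
    (h : ℝ → ℝ) (hhmeas : Measurable h)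
    (hhint : Integrable (fun u => h u * p u))
    (x : ℝ) (hx : x ∈ S) :
    -invStein p h x =
      (∫ x₁, ∫ x₂,
        (if x₁ ≤ x ∧ x ≤ x₂ then h x₂ - h x₁ else 0) * p x₁ * p x₂) / p x := by
  have hpint : Integrable p := by
    by_contra hc
    rw [MeasureTheory.integral_undef hc] at hp1
    norm_num at hp1
  set m : ℝ := ∫ y, h y * p y with hm
  set A : ℝ := ∫ y in Ici x, h y * p y with hA
  set B : ℝ := ∫ y in Ici x, p y with hB
  -- splitting lemmas
  have hsplitP : (∫ u in Iio x, p u) + B = 1 := by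
    rw [hB, ← hp1]
    exact intervalIntegral.integral_Iio_add_Ici hpint.integrableOn hpint.integrableOn
  have hsplitHP : (∫ u in Iio x, h u * p u) + A = m := by
    rw [hA, hm]
    exact intervalIntegral.integral_Iio_add_Ici hhint.integrableOn hhint.integrableOn
  -- inner integral
  have inner : ∀ x₁ : ℝ,
      (∫ x₂, (if x₁ ≤ x ∧ x ≤ x₂ then h x₂ - h x₁ else 0) * p x₁ * p x₂) =
        (Iic x).indicator (fun x₁ => p x₁ * A - (h x₁ * p x₁) * B) x₁ := by
    intro x₁
    by_cases hx₁ : x₁ ≤ x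
    · have heq : (fun x₂ => (if x₁ ≤ x ∧ x ≤ x₂ then h x₂ - h x₁ else 0) * p x₁ * p x₂) =
          (Ici x).indicator (fun x₂ => p x₁ * (h x₂ * p x₂) - (h x₁ * p x₁) * p x₂) := by
        funext x₂
        by_cases hxx : x ≤ x₂
        · simp only [hx₁, hxx, and_self, if_true, indicator, mem_Ici]
          ring
        · simp [indicator, hxx, mem_Ici]
      rw [heq, integral_indicator measurableSet_Ici,
        integral_sub ((hhint.integrableOn).const_mul _) ((hpint.integrableOn).const_mul _),
        integral_const_mul, integral_const_mul]
      simp [indicator, hx₁]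
      rfl
    · have heq : (fun x₂ => (if x₁ ≤ x ∧ x ≤ x₂ then h x₂ - h x₁ else 0) * p x₁ * p x₂) =
          fun _ => (0 : ℝ) := by
        funext x₂
        simp [hx₁]
      rw [heq, integral_zero]
      simp [indicator, hx₁]
  -- outer integral
  have houter : (∫ x₁, ∫ x₂,
      (if x₁ ≤ x ∧ x ≤ x₂ then h x₂ - h x₁ else 0) * p x₁ * p x₂) =
      (1 - B) * A - (m - A) * B := by
    have : (∫ x₁, ∫ x₂,
        (if x₁ ≤ x ∧ x ≤ x₂ then h x₂ - h x₁ else 0) * p x₁ * p x₂) =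
        ∫ x₁ in Iic x, (p x₁ * A - (h x₁ * p x₁) * B) := by
      rw [← integral_indicator measurableSet_Iic]
      exact integral_congr_ae (Filter.Eventually.of_forall inner)
    rw [this,
      integral_sub ((hpint.integrableOn).mul_const _) ((hhint.integrableOn).mul_const _),
      integral_mul_const, integral_mul_const,
      integral_Iic_eq_integral_Iio, integral_Iic_eq_integral_Iio]
    have e1 : (∫ u in Iio x, p u) = 1 - B := by linarith
    have e2 : (∫ u in Iio x, h u * p u) = m - A := by linarith
    rw [e1, e2]
  -- the numerator of invStein
  have hnum : (∫ u in Iio x, (h u - m) * p u) = (m - A) - m * (1 - B) := by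
    have heq : (fun u => (h u - m) * p u) = fun u => h u * p u - m * p u := by
      funext u; ring
    rw [heq, integral_sub hhint.integrableOn ((hpint.integrableOn).const_mul _),
      integral_const_mul]
    have e1 : (∫ u in Iio x, p u) = 1 - B := by linarith
    have e2 : (∫ u in Iio x, h u * p u) = m - A := by linarith
    rw [e1, e2]
  rw [invStein, houter, ← hm, hnum, ← neg_div]
  congr 1
  ring
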